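/- In the network model (P1), assume the single-period problem (P3) is feasible. Then for every E ≥ Σ_{n=1}^N 2·max_{1 ≤ k ≤ T} |Σ_{t=1}^k (d̄_n − d_{n,t})|, one has C*(E) = T·V(P3), where V(P3) is the optimal value of (P3). In particular, C*(E) is eventually constant and equal to T·V(P3) as E grows. -/

import Mathlib

open Finset Filter

/-- Feasibility for the network model (P1) at total storage capacity `E`:
(i) nodal power balance with storage action `u`, (ii) line limits,
(iii) state-of-charge constraints with `x_{n,0} = e n / 2`, `0 ≤ x ≤ e n`,
`x_{n,T} = e n / 2`, and (iv) total capacity budget `∑ n, e n ≤ E`. -/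
def netFeasible (N T : ℕ) (Y fmax : Fin N → Fin N → ℝ) (d : Fin N → Fin T → ℝ)
    (E : ℝ) (g u θ : Fin N → Fin T → ℝ) (e : Fin N → ℝ) : Prop :=
  (∀ n, 0 ≤ e n) ∧
  (∀ n t, g n t - u n t - d n t = ∑ m, Y n m * (θ n t - θ m t)) ∧
  (∀ n m t, Y n m * (θ n t - θ m t) ≤ fmax n m) ∧
  (∀ n, ∀ k : Fin T, 0 ≤ e n / 2 + ∑ t ∈ Finset.Iic k, u n t) ∧
  (∀ n, ∀ k : Fin T, e n / 2 + ∑ t ∈ Finset.Iic k, u n t ≤ e n) ∧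
  (∀ n, e n / 2 + ∑ t, u n t = e n / 2) ∧
  (∑ n, e n ≤ E)

/-- Total generation cost `∑ n ∑ t C_n (g n t)` with quadratic costs. -/
noncomputable def netCost (N T : ℕ) (a b c : Fin N → ℝ) (g : Fin N → Fin T → ℝ) : ℝ :=
  ∑ n, ∑ t, ((1 / 2) * a n * (g n t) ^ 2 + b n * g n t + c n)

/-- Optimal cost `C*(E)` of the network model (P1). -/
noncomputable def netCstar (N T : ℕ) (Y fmax : Fin N → Fin N → ℝ)
    (d : Fin N → Fin T → ℝ) (a b c : Fin N → ℝ) (E : ℝ) : ℝ :=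
  sInf {y : ℝ | ∃ g u θ : Fin N → Fin T → ℝ, ∃ e : Fin N → ℝ,
    netFeasible N T Y fmax d E g u θ e ∧ y = netCost N T a b c g}

/-- Feasibility for the single-period problem (P3): balance with the
time-averaged demands `d̄ n = (1/T)·∑ t, d n t` and line limits. -/
def p3Feasible (N T : ℕ) (Y fmax : Fin N → Fin N → ℝ) (d : Fin N → Fin T → ℝ)
    (g θ : Fin N → ℝ) : Prop :=
  (∀ n, g n - (∑ t, d n t) / (T : ℝ) = ∑ m, Y n m * (θ n - θ m)) ∧
  (∀ n m, Y n m * (θ n - θ m) ≤ fmax n m)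

/-- Optimal value `V(P3)` of the single-period problem (P3). -/
noncomputable def p3Value (N T : ℕ) (Y fmax : Fin N → Fin N → ℝ)
    (d : Fin N → Fin T → ℝ) (a b c : Fin N → ℝ) : ℝ :=
  sInf {y : ℝ | ∃ g θ : Fin N → ℝ, p3Feasible N T Y fmax d g θ ∧
    y = ∑ n, ((1 / 2) * a n * (g n) ^ 2 + b n * g n + c n)}

/-- Assume the single-period problem (P3) is feasible. Then for
every `E ≥ ∑ n, 2·max_k |∑_{t ≤ k} (d̄ n − d n t)|`, one has
`C*(E) = T·V(P3)`; in particular `C*` is eventually constant, equal to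
`T·V(P3)`. -/
theorem net_cstar_eventually_T_mul_p3Value
    (N T : ℕ) (hN : 1 ≤ N) (hT : 1 ≤ T)
    (Y fmax : Fin N → Fin N → ℝ)
    (hYsymm : ∀ n m, Y n m = Y m n) (hYnonneg : ∀ n m, 0 ≤ Y n m)
    (hYdiag : ∀ n, Y n n = 0) (hfmax : ∀ n m, 0 < fmax n m)
    (d : Fin N → Fin T → ℝ) (a b c : Fin N → ℝ) (ha : ∀ n, 0 < a n)
    (hp3 : ∃ g θ : Fin N → ℝ, p3Feasible N T Y fmax d g θ) :
    ∀ E : ℝ,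
      (∑ n, 2 * Finset.univ.sup' ⟨⟨0, hT⟩, Finset.mem_univ _⟩
          (fun k : Fin T =>
            |∑ t ∈ Finset.Iic k, ((∑ s, d n s) / (T : ℝ) - d n t)|)) ≤ E →
      netCstar N T Y fmax d a b c E = (T : ℝ) * p3Value N T Y fmax d a b c := by
  intro E hE
  have hT0 : (0 : ℝ) < (T : ℝ) := by exact_mod_cast Nat.lt_of_lt_of_le Nat.zero_lt_one hT
  have hT0' : (T : ℝ) ≠ 0 := ne_of_gt hT0
  set Sp3 : Set ℝ := {y : ℝ | ∃ g θ : Fin N → ℝ, p3Feasible N T Y fmax d g θ ∧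
    y = ∑ n, ((1 / 2) * a n * (g n) ^ 2 + b n * g n + c n)} with hSp3def
  set Snet : Set ℝ := {y : ℝ | ∃ g u θ : Fin N → Fin T → ℝ, ∃ e : Fin N → ℝ,
    netFeasible N T Y fmax d E g u θ e ∧ y = netCost N T a b c g} with hSnetdef
  -- Sp3 is nonempty
  have hneP3 : Sp3.Nonempty := by
    obtain ⟨g, θ, hfeas⟩ := hp3
    exact ⟨_, g, θ, hfeas, rfl⟩
  -- Sp3 is bounded below
  have hbddP3 : BddBelow Sp3 := by
    refine ⟨∑ n, (c n - (b n) ^ 2 / (2 * a n)), ?_⟩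
    rintro y ⟨g, θ, _, rfl⟩
    refine Finset.sum_le_sum fun n _ => ?_
    have han := ha n
    have h2a : (2 * a n) ≠ 0 := by positivity
    have hX : (b n) ^ 2 / (2 * a n) * (2 * a n) = (b n) ^ 2 := div_mul_cancel₀ _ h2a
    nlinarith [sq_nonneg (a n * g n + b n), han, hX]
  -- Upper construction: any P3 feasible value scaled by T is attainable in the network
  have hA : ∀ y ∈ Sp3, (T : ℝ) * y ∈ Snet := by
    rintro y ⟨gP, θP, ⟨hbal, hline⟩, rfl⟩
    set db : Fin N → ℝ := fun n => (∑ s, d n s) / (T : ℝ) with hdb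
    set u : Fin N → Fin T → ℝ := fun n t => db n - d n t with hu
    set M : Fin N → ℝ := fun n => Finset.univ.sup' ⟨⟨0, hT⟩, Finset.mem_univ _⟩
        (fun k : Fin T => |∑ t ∈ Finset.Iic k, (db n - d n t)|) with hM
    set e : Fin N → ℝ := fun n => 2 * M n with he
    have hMabs : ∀ n (k : Fin T), |∑ t ∈ Finset.Iic k, u n t| ≤ M n := by
      intro n k
      exact Finset.le_sup' (fun k : Fin T => |∑ t ∈ Finset.Iic k, (db n - d n t)|)
        (Finset.mem_univ k)
    have hMnn : ∀ n, 0 ≤ M n :=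
      fun n => le_trans (abs_nonneg _) (hMabs n ⟨0, hT⟩)
    refine ⟨fun n _ => gP n, u, fun n _ => θP n, e, ⟨?_, ?_, ?_, ?_, ?_, ?_, ?_⟩, ?_⟩
    · intro n; have := hMnn n; simp only [he]; linarith
    · intro n t
      have h1 : gP n - u n t - d n t = gP n - db n := by simp only [hu]; ring
      rw [h1]; exact hbal n
    · intro n m t; exact hline n m
    · intro n k
      have h1 := hMabs n k
      have h2 := neg_abs_le (∑ t ∈ Finset.Iic k, u n t)
      simp only [he]; linarith
    · intro n k
      have h1 := hMabs n k
      have h2 := le_abs_self (∑ t ∈ Finset.Iic k, u n t)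
      simp only [he]; linarith
    · intro n
      have : ∑ t, u n t = 0 := by
        simp only [hu, hdb]
        rw [Finset.sum_sub_distrib, Finset.sum_const, Finset.card_univ,
          Fintype.card_fin, nsmul_eq_mul]
        field_simp; ring
      rw [this]; ring
    · exact hE
    · unfold netCost
      have : ∀ n : Fin N,
          (∑ _t : Fin T, ((1 / 2) * a n * (gP n) ^ 2 + b n * gP n + c n)) =
          (T : ℝ) * ((1 / 2) * a n * (gP n) ^ 2 + b n * gP n + c n) := by
        intro n
        rw [Finset.sum_const, Finset.card_univ, Fintype.card_fin, nsmul_eq_mul]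
      rw [Finset.sum_congr rfl fun n _ => this n, ← Finset.mul_sum]
  -- Lower bound: every network feasible value is at least T * sInf Sp3
  have hB : ∀ x ∈ Snet, (T : ℝ) * sInf Sp3 ≤ x := by
    rintro x ⟨g, u, θ, e, ⟨_, hbal, hline, _, _, husum, _⟩, rfl⟩
    set gbar : Fin N → ℝ := fun n => (∑ t, g n t) / (T : ℝ) with hgbar
    set θbar : Fin N → ℝ := fun n => (∑ t, θ n t) / (T : ℝ) with hθbar
    have huzero : ∀ n, ∑ t, u n t = 0 := by
      intro n; have := husum n; linarith
    have hbalbar : ∀ n, gbar n - (∑ t, d n t) / (T : ℝ) =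
        ∑ m, Y n m * (θbar n - θbar m) := by
      intro n
      have h1 : ∑ t, (g n t - u n t - d n t) = ∑ t, ∑ m, Y n m * (θ n t - θ m t) :=
        Finset.sum_congr rfl fun t _ => hbal n t
      have h2 : ∑ t, g n t - ∑ t, d n t =
          ∑ m, Y n m * (∑ t, θ n t - ∑ t, θ m t) := by
        rw [Finset.sum_comm] at h1
        rw [Finset.sum_sub_distrib, Finset.sum_sub_distrib, huzero n, sub_zero] at h1
        rw [h1]
        refine Finset.sum_congr rfl fun m _ => ?_
        rw [← Finset.mul_sum, Finset.sum_sub_distrib]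
      have h3 : ∀ m, Y n m * (θbar n - θbar m) =
          Y n m * (∑ t, θ n t - ∑ t, θ m t) / (T : ℝ) := by
        intro m; simp only [hθbar]; ring
      rw [Finset.sum_congr rfl fun m _ => h3 m, ← Finset.sum_div, ← h2]
      simp only [hgbar]; ring
    have hlinebar : ∀ n m, Y n m * (θbar n - θbar m) ≤ fmax n m := by
      intro n m
      have h1 : ∑ t, Y n m * (θ n t - θ m t) ≤ ∑ _t : Fin T, fmax n m :=
        Finset.sum_le_sum fun t _ => hline n m t
      rw [Finset.sum_const, Finset.card_univ, Fintype.card_fin, nsmul_eq_mul] at h1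
      have h2 : ∑ t, Y n m * (θ n t - θ m t) = Y n m * (∑ t, θ n t - ∑ t, θ m t) := by
        rw [← Finset.mul_sum, Finset.sum_sub_distrib]
      rw [h2] at h1
      have h3 : Y n m * (θbar n - θbar m) =
          Y n m * (∑ t, θ n t - ∑ t, θ m t) / (T : ℝ) := by
        simp only [hθbar]; ring
      rw [h3, div_le_iff₀ hT0]
      linarith
    have hmemP3 : (∑ n, ((1 / 2) * a n * (gbar n) ^ 2 + b n * gbar n + c n)) ∈ Sp3 :=
      ⟨gbar, θbar, ⟨hbalbar, hlinebar⟩, rfl⟩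
    have hinf : sInf Sp3 ≤ ∑ n, ((1 / 2) * a n * (gbar n) ^ 2 + b n * gbar n + c n) :=
      csInf_le hbddP3 hmemP3
    -- Jensen per bus
    have hjensen : ∀ n : Fin N,
        (T : ℝ) * ((1 / 2) * a n * (gbar n) ^ 2 + b n * gbar n + c n) ≤
        ∑ t, ((1 / 2) * a n * (g n t) ^ 2 + b n * g n t + c n) := by
      intro n
      have hcs : (∑ t, g n t) ^ 2 ≤ (T : ℝ) * ∑ t, (g n t) ^ 2 := by
        have := sq_sum_le_card_mul_sum_sq (s := (Finset.univ : Finset (Fin T)))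
          (f := fun t => g n t)
        simpa using this
      have hexp : ∑ t, ((1 / 2) * a n * (g n t) ^ 2 + b n * g n t + c n) =
          (1 / 2) * a n * (∑ t, (g n t) ^ 2) + b n * (∑ t, g n t) + (T : ℝ) * c n := by
        rw [Finset.sum_add_distrib, Finset.sum_add_distrib, ← Finset.mul_sum,
          ← Finset.mul_sum, Finset.sum_const, Finset.card_univ, Fintype.card_fin,
          nsmul_eq_mul]
      rw [hexp]
      have h1 : (T : ℝ) * ((1 / 2) * a n * (gbar n) ^ 2 + b n * gbar n + c n) =
          (1 / 2) * a n * ((∑ t, g n t) ^ 2 / (T : ℝ)) + b n * (∑ t, g n t) +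
          (T : ℝ) * c n := by
        simp only [hgbar]; field_simp
      rw [h1]
      have h2 : (1 / 2) * a n * ((∑ t, g n t) ^ 2 / (T : ℝ)) ≤
          (1 / 2) * a n * (∑ t, (g n t) ^ 2) := by
        have han := (ha n).le
        have : (∑ t, g n t) ^ 2 / (T : ℝ) ≤ ∑ t, (g n t) ^ 2 := by
          rw [div_le_iff₀ hT0]; nlinarith
        nlinarith
      linarith
    calc (T : ℝ) * sInf Sp3
        ≤ (T : ℝ) * ∑ n, ((1 / 2) * a n * (gbar n) ^ 2 + b n * gbar n + c n) := by
          exact mul_le_mul_of_nonneg_left hinf hT0.le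
      _ = ∑ n, (T : ℝ) * ((1 / 2) * a n * (gbar n) ^ 2 + b n * gbar n + c n) :=
          Finset.mul_sum _ _ _
      _ ≤ ∑ n, ∑ t, ((1 / 2) * a n * (g n t) ^ 2 + b n * g n t + c n) :=
          Finset.sum_le_sum fun n _ => hjensen n
      _ = netCost N T a b c g := rfl
  have hneNet : Snet.Nonempty := by
    obtain ⟨y, hy⟩ := hneP3
    exact ⟨(T : ℝ) * y, hA y hy⟩
  have hbddNet : BddBelow Snet := ⟨(T : ℝ) * sInf Sp3, hB⟩
  have hle1 : (T : ℝ) * sInf Sp3 ≤ sInf Snet := le_csInf hneNet hB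
  have hle2 : sInf Snet ≤ (T : ℝ) * sInf Sp3 := by
    have h1 : sInf Snet / (T : ℝ) ≤ sInf Sp3 := by
      refine le_csInf hneP3 fun y hy => ?_
      rw [div_le_iff₀ hT0]
      have := csInf_le hbddNet (hA y hy)
      linarith
    rw [div_le_iff₀ hT0] at h1
    linarith
  show sInf Snet = (T : ℝ) * sInf Sp3
  exact le_antisymm hle2 hle1
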